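/- Let (u_0, u_1) be a regular vector functional associated with a 2-orthogonal MPS {P_n} (i.e. {P_n} is 2-orthogonal with respect to (u_0, u_1)). If M and N are polynomials such that M u_0 = N u_1, then M = 0 and N = 0. -/

import Mathlib

open Polynomial

/-- If `(u_0, u_1)` is the regular pair of a 2-orthogonal MPS and `M u_0 = N u_1`,
then `M = 0` and `N = 0`. -/
theorem stmt16 (P : ℕ → Polynomial ℂ)
    (hmonic : ∀ n, (P n).Monic) (hdeg : ∀ n, (P n).natDegree = n)
    (u : ℕ → Module.Dual ℂ (Polynomial ℂ))
    (hdual : ∀ n m, u n (P m) = if n = m then 1 else 0)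
    (horth : ∀ ν ≤ 1, (∀ m n : ℕ, 2 * m + ν + 1 ≤ n → u ν (P m * P n) = 0) ∧
        (∀ m : ℕ, u ν (P m * P (2 * m + ν)) ≠ 0))
    (M N : Polynomial ℂ)
    (hMN : ∀ p : Polynomial ℂ, u 0 (M * p) = u 1 (N * p)) :
    M = 0 ∧ N = 0 := by
  have hP0 : P 0 = 1 := (hmonic 0).natDegree_eq_zero.mp (hdeg 0)
  have hcoeffP : ∀ m, (P m).coeff m = 1 := by
    intro m
    have := (hmonic m).coeff_natDegree
    rwa [hdeg m] at this
  -- Key vanishing lemma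
  have key : ∀ ν ≤ 1, ∀ d : ℕ, ∀ q : Polynomial ℂ, q.natDegree ≤ d →
      ∀ n, 2 * d + ν + 1 ≤ n → u ν (q * P n) = 0 := by
    intro ν hν d
    induction d with
    | zero =>
      intro q hq n hn
      have hqC : q = C (q.coeff 0) := eq_C_of_natDegree_le_zero hq
      rw [hqC, ← smul_eq_C_mul, map_smul]
      have h0 := (horth ν hν).1 0 n (by omega)
      rw [hP0, one_mul] at h0
      simp [h0]
    | succ d ih =>
      intro q hq n hn
      set c := q.coeff (d + 1) with hc
      set r := q - C c * P (d + 1) with hr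
      have hrcoeff : r.coeff (d + 1) = 0 := by
        simp [hr, coeff_sub, coeff_C_mul, hcoeffP (d + 1), hc]
      have hrd : r.natDegree ≤ d := by
        by_cases h0 : r = 0
        · simp [h0]
        · have h1 : r.natDegree ≤ d + 1 := by
            refine le_trans (natDegree_sub_le _ _) ?_
            simp only [max_le_iff]
            exact ⟨hq, le_trans (natDegree_C_mul_le _ _) (le_of_eq (hdeg _))⟩
          have h2 : r.natDegree ≠ d + 1 := by
            intro hcon
            have := leadingCoeff_ne_zero.mpr h0
            rw [leadingCoeff, hcon, hrcoeff] at this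
            exact this rfl
          omega
      have hsplit : q * P n = C c * (P (d + 1) * P n) + r * P n := by
        rw [hr]; ring
      rw [hsplit, map_add, ← smul_eq_C_mul, map_smul,
        (horth ν hν).1 (d + 1) n (by omega), ih r hrd n (by omega)]
      simp
  -- Key nonvanishing lemma
  have keyB : ∀ ν ≤ 1, ∀ q : Polynomial ℂ, q ≠ 0 →
      u ν (q * P (2 * q.natDegree + ν)) ≠ 0 := by
    intro ν hν q hq0
    set d := q.natDegree with hd
    set c := q.coeff d with hc
    have hcne : c ≠ 0 := by
      have := leadingCoeff_ne_zero.mpr hq0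
      rwa [leadingCoeff, ← hd, ← hc] at this
    set r := q - C c * P d with hr
    have hrcoeff : r.coeff d = 0 := by
      simp [hr, coeff_sub, coeff_C_mul, hcoeffP d, hc]
    have hur : u ν (r * P (2 * d + ν)) = 0 := by
      by_cases h0 : r = 0
      · simp [h0]
      · have h1 : r.natDegree ≤ d := by
          refine le_trans (natDegree_sub_le _ _) ?_
          simp only [max_le_iff]
          exact ⟨le_rfl, le_trans (natDegree_C_mul_le _ _) (le_of_eq (hdeg _))⟩
        have h2 : r.natDegree ≠ d := by
          intro hcon
          have := leadingCoeff_ne_zero.mpr h0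
          rw [leadingCoeff, hcon, hrcoeff] at this
          exact this rfl
        exact key ν hν (d - 1) r (by omega) _ (by omega)
    have hsplit : q * P (2 * d + ν) = C c * (P d * P (2 * d + ν)) + r * P (2 * d + ν) := by
      rw [hr]; ring
    rw [hsplit, map_add, hur, add_zero, ← smul_eq_C_mul, map_smul, smul_eq_mul]
    exact mul_ne_zero hcne ((horth ν hν).2 d)
  have hM0 : M = 0 := by
    by_contra hM
    have h1 : u 1 (N * P (2 * M.natDegree)) ≠ 0 := by
      rw [← hMN]
      simpa using keyB 0 (by norm_num) M hM
    have hN : N ≠ 0 := by rintro rfl; simp at h1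
    have hde : M.natDegree ≤ N.natDegree := by
      by_contra h
      exact h1 (key 1 le_rfl N.natDegree N le_rfl _ (by omega))
    have h2 : u 1 (N * P (2 * N.natDegree + 1)) ≠ 0 := keyB 1 le_rfl N hN
    have h3 : u 0 (M * P (2 * N.natDegree + 1)) = 0 :=
      key 0 (by norm_num) M.natDegree M le_rfl _ (by omega)
    rw [hMN] at h3
    exact h2 h3
  have hN0 : N = 0 := by
    by_contra hN
    refine keyB 1 le_rfl N hN ?_
    rw [← hMN, hM0, zero_mul, map_zero]
  exact ⟨hM0, hN0⟩
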